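/- arXiv:2209.05875 — 4 statements merged into one kernel-verified Lean document; each statement's English description precedes it below -/
import Mathlib

section
/- Let n be a natural number and let X, Y, Z be n×n complex matrices. Then ‖XZ − ZY‖₂² + ‖X*Z‖₂² + ‖ZY*‖₂² = ‖XZ‖₂² + ‖ZY‖₂² + ‖X*Z − ZY*‖₂². -/
open Matrix
open scoped ComplexOrder

/-- Hilbert–Schmidt (Frobenius) norm: ‖X‖₂ = √(Re Tr(XᴴX)). -/
noncomputable def hsNorm {n : ℕ} (X : Matrix (Fin n) (Fin n) ℂ) : ℝ :=
  Real.sqrt ((Matrix.trace (Xᴴ * X)).re)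

/-- Angle Θ(X,Y) = arccos(Re Tr(YᴴX) / (‖X‖₂‖Y‖₂)). -/
noncomputable def theta {n : ℕ} (X Y : Matrix (Fin n) (Fin n) ℂ) : ℝ :=
  Real.arccos ((Matrix.trace (Yᴴ * X)).re / (hsNorm X * hsNorm Y))

/-- |X| : the positive semidefinite square root of XᴴX. -/
noncomputable def matAbs {n : ℕ} (X : Matrix (Fin n) (Fin n) ℂ) : Matrix (Fin n) (Fin n) ℂ :=
  (Matrix.posSemidef_conjTranspose_mul_self X).1.eigenvectorUnitary.1 *
    diagonal ((↑) ∘ (√·) ∘ (Matrix.posSemidef_conjTranspose_mul_self X).1.eigenvalues) *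
    (star (Matrix.posSemidef_conjTranspose_mul_self X).1.eigenvectorUnitary : Matrix (Fin n) (Fin n) ℂ)


lemma hs_sq {n : ℕ} (A : Matrix (Fin n) (Fin n) ℂ) :
    hsNorm A ^ 2 = (Matrix.trace (Aᴴ * A)).re := by
  have h : (0:ℝ) ≤ (Matrix.trace (Aᴴ * A)).re := by
    have e : (Matrix.trace (Aᴴ * A)).re = ∑ i, ∑ j, Complex.normSq (A j i) := by
      simp [Matrix.trace, Matrix.diag, Matrix.mul_apply, Complex.normSq_apply,
        Complex.mul_re]
    rw [e]
    refine Finset.sum_nonneg fun i _ => Finset.sum_nonneg fun j _ => Complex.normSq_nonneg _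
  rw [hsNorm, Real.sq_sqrt h]

lemma key {n : ℕ} (A B : Matrix (Fin n) (Fin n) ℂ) :
    (Matrix.trace (Aᴴ * B)).re = (Matrix.trace (Bᴴ * A)).re := by
  have : Bᴴ * A = (Aᴴ * B)ᴴ := by simp [conjTranspose_mul]
  rw [this, trace_conjTranspose]
  simp

lemma key2 {n : ℕ} (X Y Z : Matrix (Fin n) (Fin n) ℂ) :
    (Matrix.trace ((Z*Y)ᴴ * (X*Z))).re = (Matrix.trace ((Z*Yᴴ)ᴴ * (Xᴴ*Z))).re := by
  have h1 : (Z*Y)ᴴ * (X*Z) = Yᴴ * (Zᴴ * X * Z) := by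
    simp [conjTranspose_mul, mul_assoc]
  have h2 : (Z*Yᴴ)ᴴ * (Xᴴ*Z) = Y * (Zᴴ * Xᴴ * Z) := by
    simp [conjTranspose_mul, mul_assoc]
  rw [h1, h2]
  have c : (Y * (Zᴴ * Xᴴ * Z)).trace = ((Zᴴ * Xᴴ * Z) * Y).trace :=
    Matrix.trace_mul_comm _ _
  have h3 : Zᴴ * Xᴴ * Z * Y = (Yᴴ * (Zᴴ * X * Z))ᴴ := by
    simp [conjTranspose_mul, mul_assoc]
  rw [c, h3, trace_conjTranspose]
  simp

theorem stmt_3 {n : ℕ} (X Y Z : Matrix (Fin n) (Fin n) ℂ) :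
    hsNorm (X * Z - Z * Y) ^ 2 + hsNorm (Xᴴ * Z) ^ 2 + hsNorm (Z * Yᴴ) ^ 2 =
      hsNorm (X * Z) ^ 2 + hsNorm (Z * Y) ^ 2 + hsNorm (Xᴴ * Z - Z * Yᴴ) ^ 2 := by
  simp only [hs_sq, conjTranspose_sub, Matrix.sub_mul, Matrix.mul_sub, Matrix.trace_sub,
    Complex.sub_re]
  have k1 := key (X*Z) (Z*Y)
  have k2 := key (Xᴴ*Z) (Z*Yᴴ)
  have k3 := key2 X Y Z
  linarith
end

section
/- Let n be a natural number and let X, Y be n×n complex matrices. Then |Tr(Y*X)|² ≤ Re Tr(|Y*||X*|) · Re Tr(|Y||X|). -/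
open Matrix
open scoped ComplexOrder

section SqrtHelper
open scoped MatrixOrder

lemma matAbs_eq_sqrt {n : ℕ} (X : Matrix (Fin n) (Fin n) ℂ) :
    matAbs X = CFC.sqrt (Xᴴ * X) := by
  have hP := Matrix.posSemidef_conjTranspose_mul_self X
  rw [CFC.sqrt_eq_cfc, cfc_nnreal_eq_real _ _ hP.nonneg, hP.1.cfc_eq]
  unfold matAbs Matrix.IsHermitian.cfc
  rw [Unitary.conjStarAlgAut_apply]
  congr 3
  funext i
  simp [Real.coe_toNNReal', max_eq_left (hP.eigenvalues_nonneg i)]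

lemma eq_matAbs_of_sq_eq {n : ℕ} (X : Matrix (Fin n) (Fin n) ℂ) {B : Matrix (Fin n) (Fin n) ℂ}
    (hB : B.PosSemidef) (h : B ^ 2 = Xᴴ * X) : B = matAbs X := by
  rw [matAbs_eq_sqrt]
  exact (CFC.sqrt_unique (by rw [← pow_two]; exact h) hB.nonneg).symm

end SqrtHelper

namespace MyCfc
variable {n : ℕ} {A : Matrix (Fin n) (Fin n) ℂ} (hA : A.IsHermitian)

lemma cfc_mul (f g : ℝ → ℝ) :
    hA.cfc f * hA.cfc g = hA.cfc (fun t => f t * g t) := by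
  unfold Matrix.IsHermitian.cfc
  have h1 : (star (hA.eigenvectorUnitary : Matrix (Fin n) (Fin n) ℂ)) *
      (hA.eigenvectorUnitary : Matrix (Fin n) (Fin n) ℂ) = 1 :=
    Unitary.coe_star_mul_self hA.eigenvectorUnitary
  rw [Unitary.conjStarAlgAut_apply, Unitary.conjStarAlgAut_apply, Unitary.conjStarAlgAut_apply]
  simp only [mul_assoc]
  rw [← mul_assoc (star (hA.eigenvectorUnitary : Matrix (Fin n) (Fin n) ℂ)), h1, one_mul]
  rw [← mul_assoc (diagonal _), diagonal_mul_diagonal]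
  congr 2
  funext i j
  simp [Matrix.diagonal_apply, Function.comp]

lemma cfc_herm (f : ℝ → ℝ) : (hA.cfc f).IsHermitian := by
  unfold Matrix.IsHermitian.cfc Matrix.IsHermitian
  rw [Unitary.conjStarAlgAut_apply]
  simp only [star_eq_conjTranspose, conjTranspose_mul, conjTranspose_conjTranspose,
    diagonal_conjTranspose, mul_assoc]
  congr 2
  funext i j
  simp [Matrix.diagonal_apply, Pi.star_def, Function.comp]

lemma cfc_congr {f g : ℝ → ℝ} (h : ∀ i, f (hA.eigenvalues i) = g (hA.eigenvalues i)) :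
    hA.cfc f = hA.cfc g := by
  unfold Matrix.IsHermitian.cfc
  rw [Unitary.conjStarAlgAut_apply, Unitary.conjStarAlgAut_apply]
  congr 2
  funext i j
  simp only [Matrix.diagonal_apply, Function.comp]
  split <;> simp [h]

lemma cfc_id : hA.cfc id = A := by
  conv_rhs => rw [hA.spectral_theorem]
  rfl

lemma cfc_zero {f : ℝ → ℝ} (h : ∀ i, f (hA.eigenvalues i) = 0) : hA.cfc f = 0 := by
  unfold Matrix.IsHermitian.cfc
  have : diagonal (Complex.ofReal ∘ f ∘ hA.eigenvalues) = 0 := by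
    funext i j
    simp [Matrix.diagonal_apply, Function.comp, h]
  simp [this]

lemma cfc_posSemidef {f : ℝ → ℝ} (h : ∀ i, 0 ≤ f (hA.eigenvalues i)) :
    (hA.cfc f).PosSemidef := by
  unfold Matrix.IsHermitian.cfc
  have hd : (diagonal (Complex.ofReal ∘ f ∘ hA.eigenvalues)).PosSemidef := by
    refine posSemidef_diagonal_iff.mpr fun i => ?_
    simpa using Complex.zero_le_real.mpr (h i)
  simpa [star_eq_conjTranspose] using
    hd.mul_mul_conjTranspose_same (hA.eigenvectorUnitary : Matrix (Fin n) (Fin n) ℂ)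

lemma cfc_sub (f g : ℝ → ℝ) :
    hA.cfc f - hA.cfc g = hA.cfc (fun t => f t - g t) := by
  unfold Matrix.IsHermitian.cfc
  rw [Unitary.conjStarAlgAut_apply, Unitary.conjStarAlgAut_apply, Unitary.conjStarAlgAut_apply]
  rw [← sub_mul, ← mul_sub, diagonal_sub]
  congr 2
  funext i j
  simp [Matrix.diagonal_apply, Function.comp]

noncomputable def f4 (t : ℝ) : ℝ := Real.sqrt (Real.sqrt t)
noncomputable def g4 (t : ℝ) : ℝ := (f4 t)⁻¹
noncomputable def q (t : ℝ) : ℝ := g4 t * f4 t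

lemma f4_nonneg (t : ℝ) : 0 ≤ f4 t := Real.sqrt_nonneg _
lemma f4_pos {t : ℝ} (ht : 0 < t) : 0 < f4 t :=
  Real.sqrt_pos.mpr (Real.sqrt_pos.mpr ht)
lemma q_zero : q 0 = 0 := by simp [q, g4, f4]
lemma q_pos {t : ℝ} (ht : 0 < t) : q t = 1 :=
  inv_mul_cancel₀ (ne_of_gt (f4_pos ht))
lemma f4_mul_f4 (t : ℝ) : f4 t * f4 t = Real.sqrt t :=
  Real.mul_self_sqrt (Real.sqrt_nonneg t)
lemma f4_sq_sq {t : ℝ} (ht : 0 ≤ t) : f4 t * f4 t * (f4 t * f4 t) = t := by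
  rw [f4_mul_f4]; exact Real.mul_self_sqrt ht

section X
variable (X : Matrix (Fin n) (Fin n) ℂ)

noncomputable def hH := (Matrix.posSemidef_conjTranspose_mul_self X).1

/-- `X * Π = X` where `Π = cfc q (XᴴX)` is the support projection. -/
lemma proj_eq : X * (hH X).cfc q = X := by
  have heig := (Matrix.posSemidef_conjTranspose_mul_self X).eigenvalues_nonneg
  have hc := cfc_herm (hH X) q
  set c := (hH X).cfc q with hcdef
  have key : (X - X * c)ᴴ * (X - X * c) = 0 := by
    have expand : ((hH X).cfc id - (hH X).cfc (fun t => id t * q t))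
          - ((hH X).cfc (fun t => q t * id t) - (hH X).cfc (fun t => q t * id t * q t))
          = (X - X * c)ᴴ * (X - X * c) := by
      rw [← cfc_mul (hH X) (fun t => q t * id t) q, ← cfc_mul (hH X) q id,
        ← cfc_mul (hH X) id q, cfc_id]
      rw [conjTranspose_sub, conjTranspose_mul, hc.eq]
      noncomm_ring
    rw [← expand, cfc_sub, cfc_sub, cfc_sub]
    apply cfc_zero
    intro i
    rcases lt_or_eq_of_le (heig i) with ht | ht
    · simp [q_pos ht]
    · simp [← ht, q_zero]
  have h0 : X - X * c = 0 := Matrix.conjTranspose_mul_self_eq_zero.mp key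
  exact (sub_eq_zero.mp h0).symm

/-- `T * T = |X|` where `T = cfc f4 (XᴴX)`. -/
lemma sq_eq_abs : (hH X).cfc f4 * (hH X).cfc f4 = matAbs X := by
  have heig := (Matrix.posSemidef_conjTranspose_mul_self X).eigenvalues_nonneg
  rw [cfc_mul]
  refine eq_matAbs_of_sq_eq _ ?_ ?_
  · exact cfc_posSemidef _ fun i => mul_nonneg (f4_nonneg _) (f4_nonneg _)
  · rw [pow_two, cfc_mul]
    rw [cfc_congr (hH X) (g := id) (fun i => f4_sq_sq (heig i))]
    exact cfc_id _

/-- `K * Kᴴ = |Xᴴ|` where `K = X * cfc g4 (XᴴX)`. -/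
lemma mul_conj_eq_abs :
    (X * (hH X).cfc g4) * (X * (hH X).cfc g4)ᴴ = matAbs Xᴴ := by
  have heig := (Matrix.posSemidef_conjTranspose_mul_self X).eigenvalues_nonneg
  have hg := cfc_herm (hH X) g4
  refine eq_matAbs_of_sq_eq _ ?_ ?_
  · exact Matrix.posSemidef_self_mul_conjTranspose _
  · have mid : (hH X).cfc g4 * (hH X).cfc g4 * (Xᴴ * X) * ((hH X).cfc g4 * (hH X).cfc g4)
        = (hH X).cfc q := by
      have h1 : (hH X).cfc (fun t => g4 t * g4 t) * (hH X).cfc id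
            * (hH X).cfc (fun t => g4 t * g4 t) = (hH X).cfc q := by
        rw [cfc_mul (hH X) (fun t => g4 t * g4 t) id, cfc_mul]
        refine cfc_congr (hH X) fun i => ?_
        rcases lt_or_eq_of_le (heig i) with ht | ht
        · set t := (hH X).eigenvalues i with htdef
          have hgg : g4 t * g4 t = (Real.sqrt t)⁻¹ := by
            rw [g4, ← mul_inv, f4_mul_f4]
          have hss : Real.sqrt t * Real.sqrt t = t := Real.mul_self_sqrt (le_of_lt ht)
          have hs : Real.sqrt t ≠ 0 := ne_of_gt (Real.sqrt_pos.mpr ht)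
          simp only [id_eq, q_pos ht, hgg]
          field_simp
          rw [pow_two, hss]
        · simp [← ht, q_zero, g4, f4]
      rw [cfc_id] at h1
      rw [← cfc_mul (hH X) g4 g4] at h1
      exact h1
    rw [pow_two, conjTranspose_mul, hg.eq]
    calc X * (hH X).cfc g4 * ((hH X).cfc g4 * Xᴴ) * (X * (hH X).cfc g4 * ((hH X).cfc g4 * Xᴴ))
        = X * ((hH X).cfc g4 * (hH X).cfc g4 * (Xᴴ * X) * ((hH X).cfc g4 * (hH X).cfc g4)) * Xᴴ := by
          simp only [Matrix.mul_assoc]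
      _ = X * (hH X).cfc q * Xᴴ := by rw [mid]
      _ = Xᴴᴴ * Xᴴ := by rw [proj_eq, conjTranspose_conjTranspose]



/-- Cauchy–Schwarz for the Frobenius inner product. -/
lemma cs (A B : Matrix (Fin n) (Fin n) ℂ) :
    ‖Matrix.trace (Aᴴ * B)‖ ^ 2
      ≤ (Matrix.trace (Aᴴ * A)).re * (Matrix.trace (Bᴴ * B)).re := by
  classical
  let v : Matrix (Fin n) (Fin n) ℂ → EuclideanSpace ℂ (Fin n × Fin n) :=
    fun M => WithLp.toLp 2 (fun p : Fin n × Fin n => M p.1 p.2)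
  have key : ∀ M N : Matrix (Fin n) (Fin n) ℂ,
      Matrix.trace (Mᴴ * N) = inner (𝕜 := ℂ) (v M) (v N) := by
    intro M N
    rw [PiLp.inner_apply, Fintype.sum_prod_type]
    simp only [RCLike.inner_apply, v]
    rw [Matrix.trace]
    simp only [Matrix.diag, Matrix.mul_apply, Matrix.conjTranspose_apply]
    rw [Finset.sum_comm]
    simp only [starRingEnd_apply]
    exact Finset.sum_congr rfl fun _ _ => Finset.sum_congr rfl fun _ _ => mul_comm _ _
  have h := norm_inner_le_norm (𝕜 := ℂ) (v A) (v B)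
  have habs : ‖Matrix.trace (Aᴴ * B)‖ = ‖inner (𝕜 := ℂ) (v A) (v B)‖ := by
    rw [key A B]
  have hA2 : (Matrix.trace (Aᴴ * A)).re = ‖v A‖ ^ 2 := by
    rw [key A A]; exact inner_self_eq_norm_sq (𝕜 := ℂ) (v A)
  have hB2 : (Matrix.trace (Bᴴ * B)).re = ‖v B‖ ^ 2 := by
    rw [key B B]; exact inner_self_eq_norm_sq (𝕜 := ℂ) (v B)
  rw [habs, hA2, hB2]
  calc ‖inner (𝕜 := ℂ) (v A) (v B)‖ ^ 2 ≤ (‖v A‖ * ‖v B‖) ^ 2 := by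
        have h0 : (0:ℝ) ≤ ‖inner (𝕜 := ℂ) (v A) (v B)‖ := norm_nonneg _
        exact pow_le_pow_left₀ h0 h 2
    _ = ‖v A‖ ^ 2 * ‖v B‖ ^ 2 := by ring

lemma decomp : (X * (hH X).cfc g4) * (hH X).cfc f4 = X := by
  rw [Matrix.mul_assoc, cfc_mul]
  exact proj_eq X

theorem main (Y : Matrix (Fin n) (Fin n) ℂ) :
    ‖Matrix.trace (Yᴴ * X)‖ ^ 2 ≤
      (Matrix.trace (matAbs Yᴴ * matAbs Xᴴ)).re * (Matrix.trace (matAbs Y * matAbs X)).re := by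
  set TX := (hH X).cfc f4 with hTXd
  set TY := (hH Y).cfc f4 with hTYd
  set KX := X * (hH X).cfc g4 with hKXd
  set KY := Y * (hH Y).cfc g4 with hKYd
  have hTXh : TXᴴ = TX := cfc_herm (hH X) f4
  have hTYh : TYᴴ = TY := cfc_herm (hH Y) f4
  have hX : KX * TX = X := decomp X
  have hY : KY * TY = Y := decomp Y
  have e0 : Matrix.trace (Yᴴ * X) = Matrix.trace ((TY * TX)ᴴ * (KYᴴ * KX)) := by
    conv_lhs => rw [← hX, ← hY]
    rw [conjTranspose_mul (KY) (TY), conjTranspose_mul TY TX, hTXh, hTYh]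
    rw [show TY * KYᴴ * (KX * TX) = (TY * (KYᴴ * KX)) * TX by simp only [Matrix.mul_assoc],
      Matrix.trace_mul_comm (TY * (KYᴴ * KX)) TX,
      show TX * (TY * (KYᴴ * KX)) = TX * TY * (KYᴴ * KX) by simp only [Matrix.mul_assoc]]
  have e1 : Matrix.trace ((TY * TX)ᴴ * (TY * TX)) = Matrix.trace (matAbs Y * matAbs X) := by
    rw [conjTranspose_mul TY TX, hTXh, hTYh, ← sq_eq_abs X, ← sq_eq_abs Y]
    rw [show TX * TY * (TY * TX) = TX * (TY * TY * TX) by simp only [Matrix.mul_assoc],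
      Matrix.trace_mul_comm TX (TY * TY * TX),
      show TY * TY * TX * TX = TY * TY * (TX * TX) by simp only [Matrix.mul_assoc]]
  have e2 : Matrix.trace ((KYᴴ * KX)ᴴ * (KYᴴ * KX)) = Matrix.trace (matAbs Yᴴ * matAbs Xᴴ) := by
    rw [conjTranspose_mul KYᴴ KX, conjTranspose_conjTranspose,
      ← mul_conj_eq_abs X, ← mul_conj_eq_abs Y]
    rw [show KXᴴ * KY * (KYᴴ * KX) = KXᴴ * (KY * KYᴴ * KX) by simp only [Matrix.mul_assoc],
      Matrix.trace_mul_comm KXᴴ (KY * KYᴴ * KX),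
      show KY * KYᴴ * KX * KXᴴ = KY * KYᴴ * (KX * KXᴴ) by simp only [Matrix.mul_assoc]]
  rw [e0, ← e1, ← e2, mul_comm]
  exact cs (TY * TX) (KYᴴ * KX)

end X
end MyCfc

theorem stmt_7 {n : ℕ} (X Y : Matrix (Fin n) (Fin n) ℂ) :
    ‖Matrix.trace (Yᴴ * X)‖ ^ 2 ≤
      (Matrix.trace (matAbs Yᴴ * matAbs Xᴴ)).re * (Matrix.trace (matAbs Y * matAbs X)).re :=
  MyCfc.main X Y
end

section
/- Let n be a natural number and let X, Y be n×n complex matrices. Then ‖|X| − |Y|‖₂² ≤ ‖X + Y‖₂ · ‖X − Y‖₂. -/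
open Matrix
open scoped ComplexOrder

private lemma matAbs_psd {n : ℕ} (X : Matrix (Fin n) (Fin n) ℂ) : (matAbs X).PosSemidef := by
  unfold matAbs
  rw [Matrix.star_eq_conjTranspose]
  refine Matrix.PosSemidef.mul_mul_conjTranspose_same ?_ _
  refine Matrix.PosSemidef.diagonal fun i => ?_
  simp [Complex.zero_le_real, Real.sqrt_nonneg]

private lemma matAbs_mul_self {n : ℕ} (X : Matrix (Fin n) (Fin n) ℂ) :
    matAbs X * matAbs X = Xᴴ * X := by
  have hU := Unitary.coe_star_mul_self (Matrix.posSemidef_conjTranspose_mul_self X).1.eigenvectorUnitary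
  have hdd : diagonal ((↑) ∘ (√·) ∘ (Matrix.posSemidef_conjTranspose_mul_self X).1.eigenvalues) *
      diagonal ((↑) ∘ (√·) ∘ (Matrix.posSemidef_conjTranspose_mul_self X).1.eigenvalues)
      = (diagonal (RCLike.ofReal ∘ (Matrix.posSemidef_conjTranspose_mul_self X).1.eigenvalues) :
        Matrix (Fin n) (Fin n) ℂ) := by
    rw [diagonal_mul_diagonal]; congr 1; funext i
    simp [← Complex.ofReal_mul,
      Real.mul_self_sqrt ((Matrix.posSemidef_conjTranspose_mul_self X).eigenvalues_nonneg i)]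
  conv_rhs => rw [(Matrix.posSemidef_conjTranspose_mul_self X).1.spectral_theorem, Unitary.conjStarAlgAut_apply]
  unfold matAbs
  rw [show ∀ U D V : Matrix (Fin n) (Fin n) ℂ, U * D * V * (U * D * V) = U * D * (V * U) * D * V from
    fun _ _ _ => by noncomm_ring, hU, mul_one, mul_assoc _ _ (diagonal _), hdd]

private lemma psd_diag_re_nonneg {n : ℕ} {M : Matrix (Fin n) (Fin n) ℂ} (hM : M.PosSemidef)
    (i : Fin n) : 0 ≤ (M i i).re := by
  have h := hM.re_dotProduct_nonneg (Pi.single i 1)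
  simpa [dotProduct, Matrix.mulVec_single, Pi.single_apply] using h

private lemma trace_conj_unitary {n : ℕ} (u M : Matrix (Fin n) (Fin n) ℂ)
    (huu' : u * star u = 1) :
    Matrix.trace (star u * M * u) = Matrix.trace M := by
  rw [Matrix.trace_mul_cycle, huu', one_mul]

theorem stmt_17 {n : ℕ} (X Y : Matrix (Fin n) (Fin n) ℂ) :
    hsNorm (matAbs X - matAbs Y) ^ 2 ≤ hsNorm (X + Y) * hsNorm (X - Y) := by
  classical
  set A := matAbs X with hAdef
  set B := matAbs Y with hBdef
  set S := X + Y with hSdef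
  set T := X - Y with hTdef
  have hApsd : A.PosSemidef := matAbs_psd X
  have hBpsd : B.PosSemidef := matAbs_psd Y
  have hA2 : A * A = Xᴴ * X := matAbs_mul_self X
  have hB2 : B * B = Yᴴ * Y := matAbs_mul_self Y
  set C := A - B with hCdef
  set D := A + B with hDdef
  have hC : C.IsHermitian := hApsd.isHermitian.sub hBpsd.isHermitian
  set u : Matrix (Fin n) (Fin n) ℂ := (hC.eigenvectorUnitary : Matrix (Fin n) (Fin n) ℂ) with hudef
  set lam : Fin n → ℝ := hC.eigenvalues with hlamdef
  have huu : star u * u = 1 := Unitary.coe_star_mul_self hC.eigenvectorUnitary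
  have huu' : u * star u = 1 := Unitary.coe_mul_star_self hC.eigenvectorUnitary
  have hdiag : star u * C * u = Matrix.diagonal (fun i => (lam i : ℂ)) :=
    by have h := hC.conjStarAlgAut_star_eigenvectorUnitary
       rw [Unitary.conjStarAlgAut_star_apply] at h
       exact h
  -- key algebraic identity
  have hkey : C * D + D * C = Sᴴ * T + Tᴴ * S := by
    have h1 : C * D + D * C = (A * A + A * A) - (B * B + B * B) := by
      rw [hCdef, hDdef]; noncomm_ring
    have h2 : Sᴴ * T + Tᴴ * S = (Xᴴ * X + Xᴴ * X) - (Yᴴ * Y + Yᴴ * Y) := by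
      rw [hSdef, hTdef, Matrix.conjTranspose_add, Matrix.conjTranspose_sub]; noncomm_ring
    rw [h1, h2, hA2, hB2]
  set g : Fin n → ℂ := fun i => (star u * (Sᴴ * T) * u) i i with hgdef
  set p : Fin n → ℝ := fun i => ∑ k, ‖(S * u) k i‖ ^ 2 with hpdef
  set q : Fin n → ℝ := fun i => ∑ k, ‖(T * u) k i‖ ^ 2 with hqdef
  set d : Fin n → ℝ := fun i => ((star u * D * u) i i).re with hddef
  -- |lam i| ≤ d i
  have habs : ∀ i, |lam i| ≤ d i := by
    intro i
    have hDC : D - C = B + B := by rw [hCdef, hDdef]; noncomm_ring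
    have hDC' : D + C = A + A := by rw [hCdef, hDdef]; noncomm_ring
    have h1 : (0:ℝ) ≤ ((star u * (D - C) * u) i i).re := by
      rw [hDC]
      exact psd_diag_re_nonneg (by
        simpa [Matrix.star_eq_conjTranspose] using (hBpsd.add hBpsd).conjTranspose_mul_mul_same u) i
    have h2 : (0:ℝ) ≤ ((star u * (D + C) * u) i i).re := by
      rw [hDC']
      exact psd_diag_re_nonneg (by
        simpa [Matrix.star_eq_conjTranspose] using (hApsd.add hApsd).conjTranspose_mul_mul_same u) i
    have e1 : star u * (D - C) * u = star u * D * u - star u * C * u := by noncomm_ring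
    have e2 : star u * (D + C) * u = star u * D * u + star u * C * u := by noncomm_ring
    rw [e1] at h1; rw [e2] at h2
    rw [hdiag] at h1 h2
    simp only [Matrix.sub_apply, Matrix.add_apply, Matrix.diagonal_apply_eq, Complex.sub_re,
      Complex.add_re, Complex.ofReal_re, sub_nonneg] at h1 h2
    rw [abs_le]
    constructor
    · linarith
    · exact h1
  have hdnonneg : ∀ i, 0 ≤ d i := fun i => (abs_nonneg _).trans (habs i)
  -- lam i * d i = (g i).re
  have hld : ∀ i, lam i * d i = (g i).re := by
    intro i
    have hCu : star u * C = Matrix.diagonal (fun i => (lam i : ℂ)) * star u := by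
      calc star u * C = star u * C * (u * star u) := by rw [huu', mul_one]
        _ = (star u * C * u) * star u := by noncomm_ring
        _ = _ := by rw [hdiag]
    have huC : C * u = u * Matrix.diagonal (fun i => (lam i : ℂ)) := by
      calc C * u = (u * star u) * C * u := by rw [huu', one_mul]
        _ = u * (star u * C * u) := by noncomm_ring
        _ = _ := by rw [hdiag]
    have eCD : star u * (C * D) * u
        = Matrix.diagonal (fun i => (lam i : ℂ)) * (star u * D * u) := by
      calc star u * (C * D) * u = (star u * C) * D * u := by noncomm_ring
        _ = Matrix.diagonal (fun i => (lam i : ℂ)) * star u * D * u := by rw [hCu]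
        _ = _ := by noncomm_ring
    have eDC : star u * (D * C) * u
        = (star u * D * u) * Matrix.diagonal (fun i => (lam i : ℂ)) := by
      calc star u * (D * C) * u = star u * D * (C * u) := by noncomm_ring
        _ = star u * D * (u * Matrix.diagonal (fun i => (lam i : ℂ))) := by rw [huC]
        _ = _ := by noncomm_ring
    have eTS : star u * (Tᴴ * S) * u = (star u * (Sᴴ * T) * u)ᴴ := by
      simp [Matrix.conjTranspose_mul, Matrix.star_eq_conjTranspose, mul_assoc]
    have emain : star u * (C * D + D * C) * u = star u * (Sᴴ * T + Tᴴ * S) * u := by rw [hkey]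
    have e1 : star u * (C * D + D * C) * u
        = star u * (C * D) * u + star u * (D * C) * u := by noncomm_ring
    have e2 : star u * (Sᴴ * T + Tᴴ * S) * u
        = star u * (Sᴴ * T) * u + star u * (Tᴴ * S) * u := by noncomm_ring
    rw [e1, e2, eCD, eDC, eTS] at emain
    have := congrArg (fun M => (M i i).re) emain
    simp only [Matrix.add_apply, Matrix.diagonal_mul, Matrix.mul_diagonal,
      Matrix.conjTranspose_apply, Complex.add_re, Complex.re_ofReal_mul,
      Complex.mul_re, Complex.ofReal_re, Complex.ofReal_im, mul_zero, sub_zero,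
      Complex.star_def, Complex.conj_re] at this
    simp only [hddef, hgdef]
    linarith [this]
  -- Cauchy–Schwarz entrywise
  have hgcs : ∀ i, |(g i).re| ≤ Real.sqrt (p i) * Real.sqrt (q i) := by
    intro i
    have hrw : star u * (Sᴴ * T) * u = (S * u)ᴴ * (T * u) := by
      simp [Matrix.conjTranspose_mul, Matrix.star_eq_conjTranspose, mul_assoc]
    have hg' : g i = ∑ k, star ((S * u) k i) * ((T * u) k i) := by
      show (star u * (Sᴴ * T) * u) i i = _
      rw [hrw]
      simp only [Matrix.mul_apply, Matrix.conjTranspose_apply]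
    have h1 : |(g i).re| ≤ ∑ k, ‖(S * u) k i‖ * ‖(T * u) k i‖ := by
      rw [hg', Complex.re_sum]
      refine (Finset.abs_sum_le_sum_abs _ _).trans (Finset.sum_le_sum fun k _ => ?_)
      have h := Complex.abs_re_le_norm (star ((S * u) k i) * ((T * u) k i))
      simpa [norm_mul] using h
    exact h1.trans (by
      simpa only [hpdef, hqdef] using
        Real.sum_mul_le_sqrt_mul_sqrt Finset.univ (fun k => ‖(S * u) k i‖)
          (fun k => ‖(T * u) k i‖))
  have hpnn : ∀ i, 0 ≤ p i := fun i => Finset.sum_nonneg fun k _ => sq_nonneg _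
  have hqnn : ∀ i, 0 ≤ q i := fun i => Finset.sum_nonneg fun k _ => sq_nonneg _
  -- summation
  have hsum : ∑ i, lam i ^ 2 ≤ Real.sqrt (∑ i, p i) * Real.sqrt (∑ i, q i) := by
    have step1 : ∀ i, lam i ^ 2 ≤ Real.sqrt (p i) * Real.sqrt (q i) := by
      intro i
      have h1 : lam i ^ 2 ≤ |lam i| * d i := by
        rw [← sq_abs, sq]
        exact mul_le_mul_of_nonneg_left (habs i) (abs_nonneg _)
      have h2 : |lam i| * d i = |(g i).re| := by
        rw [← hld i, abs_mul, abs_of_nonneg (hdnonneg i)]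
      exact h1.trans (h2 ▸ hgcs i)
    calc ∑ i, lam i ^ 2 ≤ ∑ i, Real.sqrt (p i) * Real.sqrt (q i) :=
          Finset.sum_le_sum fun i _ => step1 i
      _ ≤ _ := Real.sum_sqrt_mul_sqrt_le _ hpnn hqnn
  -- trace identities
  have htrP : ∀ M : Matrix (Fin n) (Fin n) ℂ,
      (Matrix.trace (Mᴴ * M)).re = ∑ i, ∑ k, ‖M k i‖ ^ 2 := by
    intro M
    simp only [Matrix.trace, Matrix.diag, Matrix.mul_apply, Matrix.conjTranspose_apply,
      Complex.re_sum]
    refine Finset.sum_congr rfl fun i _ => Finset.sum_congr rfl fun k _ => ?_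
    rw [Complex.star_def, mul_comm, Complex.mul_conj]
    simp [← Complex.sq_norm, ← Complex.ofReal_pow]
  have htrC : (Matrix.trace (Cᴴ * C)).re = ∑ i, lam i ^ 2 := by
    have h1 : Cᴴ * C = C * C := by rw [hC.eq]
    have h2 : Matrix.trace (star u * (C * C) * u) = Matrix.trace (C * C) :=
      trace_conj_unitary u _ huu'
    have h3 : star u * (C * C) * u = (star u * C * u) * (star u * C * u) := by
      have h4 : C * C = C * (u * star u) * C := by rw [huu', mul_one]
      rw [h4]; noncomm_ring
    rw [h1, ← h2, h3, hdiag, Matrix.diagonal_mul_diagonal]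
    simp [Matrix.trace, Matrix.diag, Complex.re_sum, ← Complex.ofReal_mul, sq]
  have htrS : (Matrix.trace (Sᴴ * S)).re = ∑ i, p i := by
    have h2 : Matrix.trace (star u * (Sᴴ * S) * u) = Matrix.trace (Sᴴ * S) :=
      trace_conj_unitary u _ huu'
    have h3 : star u * (Sᴴ * S) * u = (S * u)ᴴ * (S * u) := by
      simp [Matrix.conjTranspose_mul, Matrix.star_eq_conjTranspose, mul_assoc]
    rw [← h2, h3, htrP (S * u)]
  have htrT : (Matrix.trace (Tᴴ * T)).re = ∑ i, q i := by
    have h2 : Matrix.trace (star u * (Tᴴ * T) * u) = Matrix.trace (Tᴴ * T) :=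
      trace_conj_unitary u _ huu'
    have h3 : star u * (Tᴴ * T) * u = (T * u)ᴴ * (T * u) := by
      simp [Matrix.conjTranspose_mul, Matrix.star_eq_conjTranspose, mul_assoc]
    rw [← h2, h3, htrP (T * u)]
  have hLHS : hsNorm C ^ 2 = ∑ i, lam i ^ 2 := by
    rw [hsNorm, htrC, Real.sq_sqrt (Finset.sum_nonneg fun i _ => sq_nonneg _)]
  have hRHS : hsNorm S * hsNorm T = Real.sqrt (∑ i, p i) * Real.sqrt (∑ i, q i) := by
    rw [hsNorm, hsNorm, htrS, htrT]
  rw [hLHS, hRHS]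
  exact hsum
end

section
/- Let n be a natural number and let X, Y be n×n complex matrices. Then ‖X + Y‖₂ ≤ √((√2 + 1)/2) · ‖|X| + |Y|‖₂. -/
open Matrix
open scoped ComplexOrder

section Aux
variable {n : ℕ}


noncomputable def mvec (A : Matrix (Fin n) (Fin n) ℂ) : EuclideanSpace ℂ (Fin n × Fin n) :=
  WithLp.toLp 2 (fun p : Fin n × Fin n => A p.1 p.2)

lemma trace_eq_inner (A B : Matrix (Fin n) (Fin n) ℂ) :
    Matrix.trace (Aᴴ * B) = inner ℂ (mvec A) (mvec B) := by
  simp only [Matrix.trace, Matrix.diag, Matrix.mul_apply, Matrix.conjTranspose_apply,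
    PiLp.inner_apply, RCLike.inner_apply, mvec]
  rw [Fintype.sum_prod_type, Finset.sum_comm]
  simp [mul_comm]

lemma re_trace_self_eq (A : Matrix (Fin n) (Fin n) ℂ) :
    (Matrix.trace (Aᴴ * A)).re = ‖mvec A‖ ^ 2 := by
  rw [trace_eq_inner, ← inner_self_eq_norm_sq (𝕜 := ℂ)]; rfl

lemma re_trace_self_nonneg (A : Matrix (Fin n) (Fin n) ℂ) :
    0 ≤ (Matrix.trace (Aᴴ * A)).re := by
  rw [re_trace_self_eq]; positivity

lemma hsNorm_eq (A : Matrix (Fin n) (Fin n) ℂ) : hsNorm A = ‖mvec A‖ := by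
  rw [hsNorm, re_trace_self_eq, Real.sqrt_sq (norm_nonneg _)]

lemma hsNorm_nonneg (A : Matrix (Fin n) (Fin n) ℂ) : 0 ≤ hsNorm A := Real.sqrt_nonneg _

lemma hsNorm_sq (A : Matrix (Fin n) (Fin n) ℂ) :
    hsNorm A ^ 2 = (Matrix.trace (Aᴴ * A)).re := by
  rw [hsNorm_eq, re_trace_self_eq]

/-- Cauchy–Schwarz -/
lemma re_trace_le (A B : Matrix (Fin n) (Fin n) ℂ) :
    (Matrix.trace (Aᴴ * B)).re ≤ hsNorm A * hsNorm B := by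
  rw [trace_eq_inner, hsNorm_eq, hsNorm_eq]
  calc (inner ℂ (mvec A) (mvec B) : ℂ).re ≤ ‖(inner ℂ (mvec A) (mvec B) : ℂ)‖ :=
        Complex.re_le_norm _
    _ ≤ ‖mvec A‖ * ‖mvec B‖ := norm_inner_le_norm _ _

/-- CS in product form -/
lemma re_trace_mul_le (A B : Matrix (Fin n) (Fin n) ℂ) :
    (Matrix.trace (A * B)).re ≤ hsNorm A * hsNorm B := by
  have h := re_trace_le (Aᴴ) B
  rw [conjTranspose_conjTranspose] at h
  have : hsNorm Aᴴ = hsNorm A := by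
    rw [hsNorm, hsNorm, conjTranspose_conjTranspose, Matrix.trace_mul_comm]
  rwa [this] at h


lemma proj_one_sub {F : Matrix (Fin n) (Fin n) ℂ} (hFF : F * F = F) :
    (1 - F) * (1 - F) = 1 - F := by
  rw [mul_sub, sub_mul, sub_mul, hFF, one_mul, mul_one, one_mul, sub_self, sub_zero]

lemma re_trace_proj_left (F B : Matrix (Fin n) (Fin n) ℂ) (hF : Fᴴ = F) (hFF : F * F = F) :
    (Matrix.trace (Bᴴ * (F * B))).re ≤ (Matrix.trace (Bᴴ * B)).re := by
  have h2 : ((1 - F) * B)ᴴ * ((1 - F) * B) = Bᴴ * B - Bᴴ * (F * B) := by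
    rw [conjTranspose_mul, conjTranspose_sub, conjTranspose_one, hF,
      Matrix.mul_assoc, ← Matrix.mul_assoc (1 - F), proj_one_sub hFF]
    rw [sub_mul, one_mul, mul_sub]
  have h3 := re_trace_self_nonneg ((1 - F) * B)
  rw [h2, Matrix.trace_sub, Complex.sub_re] at h3
  linarith

lemma re_trace_proj_right (F B : Matrix (Fin n) (Fin n) ℂ) (hF : Fᴴ = F) (hFF : F * F = F) :
    (Matrix.trace (Bᴴ * B * F)).re ≤ (Matrix.trace (Bᴴ * B)).re := by
  have h2 : Matrix.trace ((B * (1 - F))ᴴ * (B * (1 - F)))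
      = Matrix.trace (Bᴴ * B) - Matrix.trace (Bᴴ * B * F) := by
    calc Matrix.trace ((B * (1 - F))ᴴ * (B * (1 - F)))
        = Matrix.trace ((1 - F) * (Bᴴ * (B * (1 - F)))) := by
          rw [conjTranspose_mul, conjTranspose_sub, conjTranspose_one, hF, Matrix.mul_assoc]
      _ = Matrix.trace ((Bᴴ * (B * (1 - F))) * (1 - F)) := Matrix.trace_mul_comm _ _
      _ = Matrix.trace (Bᴴ * B * ((1 - F) * (1 - F))) := by simp only [Matrix.mul_assoc]
      _ = Matrix.trace (Bᴴ * B * (1 - F)) := by rw [proj_one_sub hFF]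
      _ = Matrix.trace (Bᴴ * B) - Matrix.trace (Bᴴ * B * F) := by
          rw [mul_sub, mul_one, Matrix.trace_sub]
  have h3 := re_trace_self_nonneg (B * (1 - F))
  rw [h2, Complex.sub_re] at h3
  linarith

/-- `hsNorm (Uᴴ * B) ≤ hsNorm B` when `U * Uᴴ` is idempotent. -/
lemma hsNorm_conjTranspose_mul_le (U B : Matrix (Fin n) (Fin n) ℂ)
    (hFF : (U * Uᴴ) * (U * Uᴴ) = U * Uᴴ) : hsNorm (Uᴴ * B) ≤ hsNorm B := by
  have hF : (U * Uᴴ)ᴴ = U * Uᴴ := by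
    rw [conjTranspose_mul, conjTranspose_conjTranspose]
  have key : (Uᴴ * B)ᴴ * (Uᴴ * B) = Bᴴ * ((U * Uᴴ) * B) := by
    rw [conjTranspose_mul, conjTranspose_conjTranspose]
    simp only [Matrix.mul_assoc]
  apply Real.sqrt_le_sqrt
  rw [key]
  exact re_trace_proj_left _ _ hF hFF

/-- `hsNorm (B * U) ≤ hsNorm B` when `U * Uᴴ` is idempotent. -/
lemma hsNorm_mul_le (U B : Matrix (Fin n) (Fin n) ℂ)
    (hFF : (U * Uᴴ) * (U * Uᴴ) = U * Uᴴ) : hsNorm (B * U) ≤ hsNorm B := by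
  have hF : (U * Uᴴ)ᴴ = U * Uᴴ := by
    rw [conjTranspose_mul, conjTranspose_conjTranspose]
  have key : Matrix.trace ((B * U)ᴴ * (B * U)) = Matrix.trace (Bᴴ * B * (U * Uᴴ)) := by
    calc Matrix.trace ((B * U)ᴴ * (B * U)) = Matrix.trace (Uᴴ * (Bᴴ * (B * U))) := by
          rw [conjTranspose_mul, Matrix.mul_assoc]
      _ = Matrix.trace ((Bᴴ * (B * U)) * Uᴴ) := Matrix.trace_mul_comm _ _
      _ = Matrix.trace (Bᴴ * B * (U * Uᴴ)) := by simp only [Matrix.mul_assoc]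
  apply Real.sqrt_le_sqrt
  rw [key]
  exact re_trace_proj_right _ _ hF hFF


lemma diag_ofReal_mul {n : ℕ} (f h : Fin n → ℝ) :
    diagonal ((↑) ∘ f : Fin n → ℂ) * diagonal ((↑) ∘ h) =
      diagonal ((↑) ∘ (fun i => f i * h i)) := by
  rw [diagonal_mul_diagonal]
  refine congrArg diagonal (funext fun i => ?_)
  simp [Function.comp_apply]

lemma psd_sqrt_facts (A : Matrix (Fin n) (Fin n) ℂ) (hA : A.PosSemidef) :
    (hA.1.eigenvectorUnitary.1 *
      diagonal ((↑) ∘ (√·) ∘ hA.1.eigenvalues : Fin n → ℂ) *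
      (star hA.1.eigenvectorUnitary : Matrix (Fin n) (Fin n) ℂ)).PosSemidef ∧
    (hA.1.eigenvectorUnitary.1 *
      diagonal ((↑) ∘ (√·) ∘ hA.1.eigenvalues : Fin n → ℂ) *
      (star hA.1.eigenvectorUnitary : Matrix (Fin n) (Fin n) ℂ)) *
    (hA.1.eigenvectorUnitary.1 *
      diagonal ((↑) ∘ (√·) ∘ hA.1.eigenvalues : Fin n → ℂ) *
      (star hA.1.eigenvectorUnitary : Matrix (Fin n) (Fin n) ℂ)) = A := by
  have hU : (star hA.1.eigenvectorUnitary : Matrix (Fin n) (Fin n) ℂ) * hA.1.eigenvectorUnitary.1 = 1 :=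
    (Matrix.mem_unitaryGroup_iff').mp hA.1.eigenvectorUnitary.2
  constructor
  · have := (PosSemidef.diagonal (d := ((↑) ∘ (√·) ∘ hA.1.eigenvalues : Fin n → ℂ))
      (fun i => by simp [Real.sqrt_nonneg])).mul_mul_conjTranspose_same hA.1.eigenvectorUnitary.1
    simpa [Matrix.star_eq_conjTranspose] using this
  · conv_rhs => rw [hA.1.spectral_theorem, Unitary.conjStarAlgAut_apply]
    calc _ = hA.1.eigenvectorUnitary.1 *
      (diagonal ((↑) ∘ (√·) ∘ hA.1.eigenvalues : Fin n → ℂ) * ((star hA.1.eigenvectorUnitary : Matrix (Fin n) (Fin n) ℂ) * hA.1.eigenvectorUnitary.1) *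
      diagonal ((↑) ∘ (√·) ∘ hA.1.eigenvalues : Fin n → ℂ)) *
      (star hA.1.eigenvectorUnitary : Matrix (Fin n) (Fin n) ℂ) := by simp only [Matrix.mul_assoc]
      _ = _ := by
        rw [hU, Matrix.mul_one, diagonal_mul_diagonal]
        congr 3
        funext i
        simp only [Function.comp_apply, ← Complex.ofReal_mul, Real.mul_self_sqrt (hA.eigenvalues_nonneg i)]
        rfl

lemma polar_exists (X : Matrix (Fin n) (Fin n) ℂ) :
    ∃ U : Matrix (Fin n) (Fin n) ℂ, U * matAbs X = X ∧
      (U * Uᴴ) * (U * Uᴴ) = U * Uᴴ ∧ (Uᴴ * U) * (Uᴴ * U) = Uᴴ * U := by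
  have hX := Matrix.posSemidef_conjTranspose_mul_self X
  set hH : (Xᴴ * X).IsHermitian := hX.1 with hHdef
  set W : Matrix (Fin n) (Fin n) ℂ := (hH.eigenvectorUnitary : Matrix (Fin n) (Fin n) ℂ) with hWdef
  set d : Fin n → ℝ := hH.eigenvalues with hddef
  have hd : ∀ i, 0 ≤ d i := hX.eigenvalues_nonneg
  have hW1 : Wᴴ * W = 1 := by
    simpa [Matrix.star_eq_conjTranspose] using
      (Matrix.mem_unitaryGroup_iff').mp hH.eigenvectorUnitary.2
  have hW2 : W * Wᴴ = 1 := by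
    simpa [Matrix.star_eq_conjTranspose] using
      (Matrix.mem_unitaryGroup_iff).mp hH.eigenvectorUnitary.2
  have hspec : Wᴴ * (Xᴴ * X) * W = diagonal ((↑) ∘ d : Fin n → ℂ) := by
    conv_lhs => rw [hH.spectral_theorem, Unitary.conjStarAlgAut_apply]
    simp only [Matrix.mul_assoc, Matrix.star_eq_conjTranspose]
    rw [hW1, Matrix.mul_one, ← Matrix.mul_assoc, hW1, Matrix.one_mul]; rfl
  set g : Fin n → ℝ := fun i => if d i = 0 then 0 else (Real.sqrt (d i))⁻¹ with hgdef
  set e : Fin n → ℝ := fun i => if d i = 0 then 0 else 1 with hedef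
  set M : Matrix (Fin n) (Fin n) ℂ := X * W with hMdef
  set Dg : Matrix (Fin n) (Fin n) ℂ := diagonal ((↑) ∘ g) with hDgdef
  have hDgH : Dgᴴ = Dg := by
    rw [hDgdef, diagonal_conjTranspose]
    ext i j
    simp only [diagonal_apply, Function.comp_apply]
    split <;> simp_all [Complex.conj_ofReal]
  have hM : Mᴴ * M = diagonal ((↑) ∘ d : Fin n → ℂ) := by
    rw [hMdef, conjTranspose_mul, ← hspec]
    simp only [Matrix.mul_assoc]
  -- vanishing columns
  have hcol : ∀ i, d i = 0 → ∀ k, M k i = 0 := by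
    intro i hdi k
    have h1 : (Mᴴ * M) i i = ((d i : ℂ)) := by rw [hM]; simp [diagonal]
    have h2 : (Mᴴ * M) i i = ∑ k, ((Complex.normSq (M k i) : ℂ)) := by
      simp only [Matrix.mul_apply, conjTranspose_apply]
      congr 1
      funext k
      rw [Complex.star_def, mul_comm, Complex.mul_conj]
    have h3 : (∑ k, Complex.normSq (M k i)) = d i := by
      have := h1.symm.trans h2
      have := congrArg Complex.re this
      simpa using this.symm
    have h4 : ∀ k ∈ Finset.univ, (0:ℝ) ≤ Complex.normSq (M k i) := by
      intro k _; exact Complex.normSq_nonneg _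
    have h5 : Complex.normSq (M k i) = 0 := by
      have := (Finset.sum_eq_zero_iff_of_nonneg h4).mp (by rw [h3, hdi]) k (Finset.mem_univ k)
      exact this
    exact Complex.normSq_eq_zero.mp h5
  have hMe : M * diagonal ((↑) ∘ e : Fin n → ℂ) = M := by
    ext k i
    rw [Matrix.mul_diagonal]
    by_cases hdi : d i = 0
    · rw [hcol i hdi k]; simp
    · simp [hedef, hdi]
  refine ⟨M * Dg * Wᴴ, ?_, ?_, ?_⟩
  · -- U * matAbs X = X
    have habs : matAbs X = W * diagonal ((↑) ∘ Real.sqrt ∘ d : Fin n → ℂ) * Wᴴ := by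
      rw [matAbs]; rfl
    calc M * Dg * Wᴴ * matAbs X
        = M * Dg * (Wᴴ * W) * diagonal ((↑) ∘ Real.sqrt ∘ d : Fin n → ℂ) * Wᴴ := by
          rw [habs]; simp only [Matrix.mul_assoc]
      _ = M * (Dg * diagonal ((↑) ∘ Real.sqrt ∘ d : Fin n → ℂ)) * Wᴴ := by
          rw [hW1, Matrix.mul_one]; simp only [Matrix.mul_assoc]
      _ = M * diagonal ((↑) ∘ e : Fin n → ℂ) * Wᴴ := by
          rw [hDgdef, diagonal_mul_diagonal]
          have hge : (fun i => (((↑) ∘ g : Fin n → ℂ)) i * (((↑) ∘ Real.sqrt ∘ d : Fin n → ℂ)) i) = ((↑) ∘ e : Fin n → ℂ) := by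
            funext i
            simp only [Function.comp_apply, hgdef, hedef]
            by_cases hdi : d i = 0
            · simp [hdi]
            · have hs : Real.sqrt (d i) ≠ 0 :=
                Real.sqrt_ne_zero'.mpr (lt_of_le_of_ne (hd i) (Ne.symm hdi))
              rw [if_neg hdi, if_neg hdi, ← Complex.ofReal_mul, inv_mul_cancel₀ hs,
                Complex.ofReal_one]
          rw [hge]
      _ = X := by rw [hMe, hMdef, Matrix.mul_assoc, hW2, Matrix.mul_one]
  · -- (U Uᴴ)² = U Uᴴ
    have hUH : (M * Dg * Wᴴ)ᴴ = W * Dg * Mᴴ := by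
      rw [conjTranspose_mul, conjTranspose_mul, conjTranspose_conjTranspose, hDgH]
      simp only [Matrix.mul_assoc]
    have hG2 : Dg * Dg = diagonal ((↑) ∘ (fun i => g i * g i) : Fin n → ℂ) := by
      rw [hDgdef, diag_ofReal_mul]
    have hG2D : diagonal ((↑) ∘ (fun i => g i * g i) : Fin n → ℂ) *
        (diagonal ((↑) ∘ d : Fin n → ℂ) * diagonal ((↑) ∘ (fun i => g i * g i) : Fin n → ℂ))
        = diagonal ((↑) ∘ (fun i => g i * g i) : Fin n → ℂ) := by
      rw [diag_ofReal_mul, diag_ofReal_mul]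
      refine congrArg diagonal (funext fun i => ?_)
      simp only [Function.comp_apply]
      rw [Complex.ofReal_inj]
      simp only [hgdef]
      by_cases hdi : d i = 0
      · simp [hdi]
      · have hs : Real.sqrt (d i) ≠ 0 :=
          Real.sqrt_ne_zero'.mpr (lt_of_le_of_ne (hd i) (Ne.symm hdi))
        simp only [if_neg hdi]
        field_simp
        exact (Real.sq_sqrt (hd i)).symm
    have hUUH : (M * Dg * Wᴴ) * (M * Dg * Wᴴ)ᴴ
        = M * (diagonal ((↑) ∘ (fun i => g i * g i) : Fin n → ℂ) * Mᴴ) := by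
      rw [hUH, ← hG2]
      simp only [Matrix.mul_assoc]
      rw [← Matrix.mul_assoc Wᴴ W, hW1, Matrix.one_mul]
    rw [hUUH]
    calc M * (diagonal ((↑) ∘ (fun i => g i * g i) : Fin n → ℂ) * Mᴴ) *
          (M * (diagonal ((↑) ∘ (fun i => g i * g i) : Fin n → ℂ) * Mᴴ))
        = M * (diagonal ((↑) ∘ (fun i => g i * g i) : Fin n → ℂ) *
            ((Mᴴ * M) * (diagonal ((↑) ∘ (fun i => g i * g i) : Fin n → ℂ) * Mᴴ))) := by
          simp only [Matrix.mul_assoc]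
      _ = M * (diagonal ((↑) ∘ (fun i => g i * g i) : Fin n → ℂ) *
            (diagonal ((↑) ∘ d : Fin n → ℂ) *
              (diagonal ((↑) ∘ (fun i => g i * g i) : Fin n → ℂ) * Mᴴ))) := by
          rw [hM]
      _ = M * ((diagonal ((↑) ∘ (fun i => g i * g i) : Fin n → ℂ) *
            (diagonal ((↑) ∘ d : Fin n → ℂ) *
              diagonal ((↑) ∘ (fun i => g i * g i) : Fin n → ℂ))) * Mᴴ) := by
          simp only [Matrix.mul_assoc]
      _ = M * (diagonal ((↑) ∘ (fun i => g i * g i) : Fin n → ℂ) * Mᴴ) := by rw [hG2D]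
  · -- (Uᴴ U)² = Uᴴ U
    have hUH : (M * Dg * Wᴴ)ᴴ = W * Dg * Mᴴ := by
      rw [conjTranspose_mul, conjTranspose_mul, conjTranspose_conjTranspose, hDgH]
      simp only [Matrix.mul_assoc]
    have hGDG : Dg * (diagonal ((↑) ∘ d : Fin n → ℂ) * Dg)
        = diagonal ((↑) ∘ e : Fin n → ℂ) := by
      rw [hDgdef, diag_ofReal_mul, diag_ofReal_mul]
      refine congrArg diagonal (funext fun i => ?_)
      simp only [Function.comp_apply]
      rw [Complex.ofReal_inj]
      simp only [hgdef, hedef]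
      by_cases hdi : d i = 0
      · simp [hdi]
      · have hs : Real.sqrt (d i) ≠ 0 :=
          Real.sqrt_ne_zero'.mpr (lt_of_le_of_ne (hd i) (Ne.symm hdi))
        simp only [if_neg hdi]
        field_simp
        exact (Real.sq_sqrt (hd i)).symm
    have hEE : diagonal ((↑) ∘ e : Fin n → ℂ) * diagonal ((↑) ∘ e : Fin n → ℂ)
        = diagonal ((↑) ∘ e : Fin n → ℂ) := by
      rw [diag_ofReal_mul]
      refine congrArg diagonal (funext fun i => ?_)
      simp only [Function.comp_apply]
      rw [Complex.ofReal_inj]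
      simp only [hedef]
      by_cases hdi : d i = 0 <;> simp [hdi]
    have hUHU : (M * Dg * Wᴴ)ᴴ * (M * Dg * Wᴴ)
        = W * (diagonal ((↑) ∘ e : Fin n → ℂ) * Wᴴ) := by
      rw [hUH]
      simp only [Matrix.mul_assoc]
      rw [← Matrix.mul_assoc Mᴴ M, hM, ← hGDG]
      simp only [Matrix.mul_assoc]
    rw [hUHU]
    calc W * (diagonal ((↑) ∘ e : Fin n → ℂ) * Wᴴ) *
          (W * (diagonal ((↑) ∘ e : Fin n → ℂ) * Wᴴ))
        = W * (diagonal ((↑) ∘ e : Fin n → ℂ) *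
            ((Wᴴ * W) * (diagonal ((↑) ∘ e : Fin n → ℂ) * Wᴴ))) := by
          simp only [Matrix.mul_assoc]
      _ = W * ((diagonal ((↑) ∘ e : Fin n → ℂ) * diagonal ((↑) ∘ e : Fin n → ℂ)) * Wᴴ) := by
          rw [hW1, Matrix.one_mul]; simp only [Matrix.mul_assoc]
      _ = W * (diagonal ((↑) ∘ e : Fin n → ℂ) * Wᴴ) := by rw [hEE]

end Aux


set_option maxHeartbeats 2000000 in
theorem stmt_19 {n : ℕ} (X Y : Matrix (Fin n) (Fin n) ℂ) :
    hsNorm (X + Y) ≤ Real.sqrt ((Real.sqrt 2 + 1) / 2) * hsNorm (matAbs X + matAbs Y) := by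
  obtain ⟨U, hU, hUF, hUE⟩ := polar_exists X
  obtain ⟨V, hV, hVF, hVE⟩ := polar_exists Y
  set P : Matrix (Fin n) (Fin n) ℂ := matAbs X with hPdef
  set Q : Matrix (Fin n) (Fin n) ℂ := matAbs Y with hQdef
  have hP : P.PosSemidef := (psd_sqrt_facts _ (Matrix.posSemidef_conjTranspose_mul_self X)).1
  have hQ : Q.PosSemidef := (psd_sqrt_facts _ (Matrix.posSemidef_conjTranspose_mul_self Y)).1
  have hPH : Pᴴ = P := hP.1
  have hQH : Qᴴ = Q := hQ.1
  have hPP : P * P = Xᴴ * X := (psd_sqrt_facts _ (Matrix.posSemidef_conjTranspose_mul_self X)).2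
  have hQQ : Q * Q = Yᴴ * Y := (psd_sqrt_facts _ (Matrix.posSemidef_conjTranspose_mul_self Y)).2
  obtain ⟨P2, hP2H, hP2P⟩ : ∃ P2 : Matrix (Fin n) (Fin n) ℂ, P2ᴴ = P2 ∧ P2 * P2 = P :=
    ⟨_, (psd_sqrt_facts _ hP).1.1, (psd_sqrt_facts _ hP).2⟩
  obtain ⟨Q2, hQ2H, hQ2Q⟩ : ∃ Q2 : Matrix (Fin n) (Fin n) ℂ, Q2ᴴ = Q2 ∧ Q2 * Q2 = Q :=
    ⟨_, (psd_sqrt_facts _ hQ).1.1, (psd_sqrt_facts _ hQ).2⟩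
  clear_value P Q
  set a : ℝ := (Matrix.trace (Xᴴ * X)).re with hadef
  set b : ℝ := (Matrix.trace (Yᴴ * Y)).re with hbdef
  set s : ℝ := (Matrix.trace (P * Q)).re with hsdef
  set t : ℝ := (Matrix.trace (Yᴴ * X)).re with htdef
  have ha : 0 ≤ a := re_trace_self_nonneg X
  have hb : 0 ≤ b := re_trace_self_nonneg Y
  -- hsNorm P = √a, hsNorm Q = √b
  have hnP : hsNorm P = Real.sqrt a := by
    rw [hsNorm, hPH, hPP]
  have hnQ : hsNorm Q = Real.sqrt b := by
    rw [hsNorm, hQH, hQQ]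
  -- hsNorm (P2 * Q2) = √s  and 0 ≤ s
  have htrPQ : Matrix.trace ((P2 * Q2)ᴴ * (P2 * Q2)) = Matrix.trace (P * Q) := by
    calc Matrix.trace ((P2 * Q2)ᴴ * (P2 * Q2))
        = Matrix.trace (Q2 * (P2 * (P2 * Q2))) := by
          rw [conjTranspose_mul, hP2H, hQ2H]; simp only [Matrix.mul_assoc]
      _ = Matrix.trace ((P2 * (P2 * Q2)) * Q2) := Matrix.trace_mul_comm _ _
      _ = Matrix.trace ((P2 * P2) * (Q2 * Q2)) := by simp only [Matrix.mul_assoc]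
      _ = Matrix.trace (P * Q) := by rw [hP2P, hQ2Q]
  have hnPQ : hsNorm (P2 * Q2) = Real.sqrt s := by rw [hsNorm, htrPQ]
  have hs0 : 0 ≤ s := by
    have := re_trace_self_nonneg (P2 * Q2); rwa [htrPQ] at this
  -- the key bound: t ≤ √(√b * √a) * √s
  have hYH : Yᴴ = Q * Vᴴ := by rw [← hV, conjTranspose_mul, hQH]
  have key1 : Matrix.trace (Yᴴ * X) = Matrix.trace ((Q2 * (Vᴴ * (U * P2))) * (P2 * Q2)) := by
    calc Matrix.trace (Yᴴ * X)
        = Matrix.trace ((Q * Vᴴ) * (U * (P2 * P2))) := by rw [hYH, hP2P, hU]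
      _ = Matrix.trace ((Q * (Vᴴ * (U * P2))) * P2) := by simp only [Matrix.mul_assoc]
      _ = Matrix.trace (P2 * (Q * (Vᴴ * (U * P2)))) := Matrix.trace_mul_comm _ _
      _ = Matrix.trace ((P2 * Q2) * (Q2 * (Vᴴ * (U * P2)))) := by
          rw [← hQ2Q]; simp only [Matrix.mul_assoc]
      _ = Matrix.trace ((Q2 * (Vᴴ * (U * P2))) * (P2 * Q2)) := Matrix.trace_mul_comm _ _
  set K : Matrix (Fin n) (Fin n) ℂ := Uᴴ * (V * (Q * (Vᴴ * U))) with hKdef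
  have key2 : Matrix.trace ((Q2 * (Vᴴ * (U * P2)))ᴴ * (Q2 * (Vᴴ * (U * P2))))
      = Matrix.trace (K * P) := by
    calc Matrix.trace ((Q2 * (Vᴴ * (U * P2)))ᴴ * (Q2 * (Vᴴ * (U * P2))))
        = Matrix.trace ((P2 * (Uᴴ * (V * (Q2 * (Q2 * (Vᴴ * (U * P2))))))) ) := by
          simp only [conjTranspose_mul, conjTranspose_conjTranspose, hP2H, hQ2H,
            Matrix.mul_assoc]
      _ = Matrix.trace ((P2 * K) * P2) := by
          rw [hKdef, ← hQ2Q]; simp only [Matrix.mul_assoc]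
      _ = Matrix.trace (P2 * (P2 * K)) := Matrix.trace_mul_comm _ _
      _ = Matrix.trace ((P2 * P2) * K) := by simp only [Matrix.mul_assoc]
      _ = Matrix.trace (K * P) := by rw [hP2P, Matrix.trace_mul_comm]
  -- hsNorm K ≤ √b
  have hVF' : (Vᴴ * (Vᴴ)ᴴ) * (Vᴴ * (Vᴴ)ᴴ) = Vᴴ * (Vᴴ)ᴴ := by
    rw [conjTranspose_conjTranspose]; exact hVE
  have hK : hsNorm K ≤ Real.sqrt b := by
    calc hsNorm K ≤ hsNorm (V * (Q * (Vᴴ * U))) := hsNorm_conjTranspose_mul_le U _ hUF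
      _ = hsNorm ((V * (Q * Vᴴ)) * U) := by simp only [Matrix.mul_assoc]
      _ ≤ hsNorm (V * (Q * Vᴴ)) := hsNorm_mul_le U _ hUF
      _ = hsNorm ((Vᴴ)ᴴ * (Q * Vᴴ)) := by rw [conjTranspose_conjTranspose]
      _ ≤ hsNorm (Q * Vᴴ) := hsNorm_conjTranspose_mul_le (Vᴴ) _ hVF'
      _ ≤ hsNorm Q := hsNorm_mul_le (Vᴴ) _ hVF'
      _ = Real.sqrt b := hnQ
  -- bound on hsNorm of the first factor
  have hA1 : hsNorm (Q2 * (Vᴴ * (U * P2))) ≤ Real.sqrt (Real.sqrt b * Real.sqrt a) := by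
    rw [hsNorm, key2]
    apply Real.sqrt_le_sqrt
    calc (Matrix.trace (K * P)).re ≤ hsNorm K * hsNorm P := re_trace_mul_le _ _
      _ ≤ Real.sqrt b * Real.sqrt a := by
          rw [hnP]
          exact mul_le_mul_of_nonneg_right hK (Real.sqrt_nonneg _)
  have ht : t ≤ Real.sqrt (Real.sqrt b * Real.sqrt a) * Real.sqrt s := by
    calc t = (Matrix.trace ((Q2 * (Vᴴ * (U * P2))) * (P2 * Q2))).re := by rw [htdef, key1]
      _ ≤ hsNorm (Q2 * (Vᴴ * (U * P2))) * hsNorm (P2 * Q2) := re_trace_mul_le _ _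
      _ ≤ Real.sqrt (Real.sqrt b * Real.sqrt a) * Real.sqrt s := by
          rw [hnPQ]
          exact mul_le_mul_of_nonneg_right hA1 (Real.sqrt_nonneg _)
  -- trace expansions
  have hsum1 : (Matrix.trace ((X + Y)ᴴ * (X + Y))).re = a + b + 2 * t := by
    rw [conjTranspose_add, Matrix.add_mul, Matrix.mul_add, Matrix.mul_add,
      Matrix.trace_add, Matrix.trace_add, Matrix.trace_add]
    have hxy : (Matrix.trace (Xᴴ * Y)).re = t := by
      have h' : Xᴴ * Y = (Yᴴ * X)ᴴ := by
        rw [conjTranspose_mul, conjTranspose_conjTranspose]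
      rw [htdef, h', Matrix.trace_conjTranspose, Complex.star_def, Complex.conj_re]
    simp only [Complex.add_re, hadef, hbdef, htdef]
    rw [show (Matrix.trace (Xᴴ * Y)).re = (Matrix.trace (Yᴴ * X)).re from hxy]
    ring
  have hsum2 : (Matrix.trace ((P + Q)ᴴ * (P + Q))).re = a + b + 2 * s := by
    rw [conjTranspose_add, hPH, hQH, Matrix.add_mul, Matrix.mul_add, Matrix.mul_add,
      Matrix.trace_add, Matrix.trace_add, Matrix.trace_add, hPP, hQQ]
    have hqp : Matrix.trace (Q * P) = Matrix.trace (P * Q) := Matrix.trace_mul_comm _ _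
    simp only [Complex.add_re, hadef, hbdef, hsdef, hqp]
    ring
  -- final numeric step
  have final : a + b + 2 * t ≤ (Real.sqrt 2 + 1) / 2 * (a + b + 2 * s) := by
    set w : ℝ := Real.sqrt 2 with hwdef
    have hw2 : w ^ 2 = 2 := Real.sq_sqrt (by norm_num)
    have hw0 : 0 ≤ w := Real.sqrt_nonneg _
    have hw1 : 1 ≤ w := by nlinarith
    set sa : ℝ := Real.sqrt a with hsadef
    set sb : ℝ := Real.sqrt b with hsbdef
    set ss : ℝ := Real.sqrt s with hssdef
    have hsa2 : sa ^ 2 = a := Real.sq_sqrt ha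
    have hsb2 : sb ^ 2 = b := Real.sq_sqrt hb
    have hss2 : ss ^ 2 = s := Real.sq_sqrt hs0
    have hsa0 : 0 ≤ sa := Real.sqrt_nonneg _
    have hsb0 : 0 ≤ sb := Real.sqrt_nonneg _
    have hss0 : 0 ≤ ss := Real.sqrt_nonneg _
    -- r ≤ q
    set q : ℝ := Real.sqrt ((a + b) / 2) with hqdef
    have hq2 : q ^ 2 = (a + b) / 2 := Real.sq_sqrt (by linarith)
    have hq0 : 0 ≤ q := Real.sqrt_nonneg _
    have hrq : Real.sqrt (sb * sa) ≤ q := by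
      apply Real.sqrt_le_sqrt
      nlinarith [sq_nonneg (sa - sb)]
    have ht2 : t ≤ q * ss :=
      ht.trans (mul_le_mul_of_nonneg_right hrq hss0)
    -- AM-GM : 2*q*ss ≤ (w-1)*q^2 + (w+1)*ss^2
    have hamgm : 2 * (q * ss) ≤ (w - 1) * q ^ 2 + (w + 1) * ss ^ 2 := by
      nlinarith [mul_nonneg (by linarith : (0:ℝ) ≤ w - 1) (sq_nonneg (q - (w + 1) * ss)), hw2]
    nlinarith [ht2, hamgm, hq2, hss2]
  -- put everything together
  have lhs_eq : hsNorm (X + Y) = Real.sqrt (a + b + 2 * t) := by rw [hsNorm, hsum1]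
  have rhs_eq : hsNorm (P + Q) = Real.sqrt (a + b + 2 * s) := by rw [hsNorm, hsum2]
  rw [lhs_eq, rhs_eq, ← Real.sqrt_mul (by positivity : (0:ℝ) ≤ (Real.sqrt 2 + 1)/2)]
  apply Real.sqrt_le_sqrt
  exact final
end
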